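/- For n ≥ 2 and m ≥ 0, projection onto the first coordinate F(ℂ_m, n) → ℂ_m, (x_1,...,x_n) ↦ x_1, is a locally trivial fibration with fibre F(ℂ_{m+1}, n-1), and this fibration admits a continuous section. -/

import Mathlib

/-- The complex plane with `m` punctures: `ℂ \ {0, 1, ..., m-1}`. -/
abbrev PuncturedPlane (m : ℕ) : Type := {z : ℂ // ∀ i : Fin m, z ≠ ((i : ℕ) : ℂ)}

/-- The ordered configuration space `F(ℂ_m, n)` of `n` distinct points in the
`m`-punctured plane. -/
abbrev Config (m n : ℕ) : Type :=
  {f : Fin n → PuncturedPlane m // Function.Injective f}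

open Metric Set Function

noncomputable section FadellNeuwirthAux

namespace FNaux

variable {ρ : ℝ} {x v z z' w w' : ℂ}

/-- bump profile -/
def flam (ρ : ℝ) (x z : ℂ) : ℝ := max 0 (1 - dist z x / ρ)

lemma flam_nonneg : 0 ≤ flam ρ x z := le_max_left _ _

lemma flam_le_one (hρ : 0 < ρ) : flam ρ x z ≤ 1 := by
  apply max_le zero_le_one
  have : 0 ≤ dist z x / ρ := div_nonneg dist_nonneg hρ.le
  linarith

lemma flam_self (hρ : 0 < ρ) : flam ρ x x = 1 := by
  simp [flam, dist_self]

lemma flam_far (hρ : 0 < ρ) (h : ρ ≤ dist z x) : flam ρ x z = 0 := by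
  apply max_eq_left
  have : 1 ≤ dist z x / ρ := (one_le_div hρ).2 h
  linarith

lemma flam_dist (hρ : 0 < ρ) : |flam ρ x z - flam ρ x z'| ≤ dist z z' / ρ := by
  have h1 : |flam ρ x z - flam ρ x z'| ≤ |(1 - dist z x / ρ) - (1 - dist z' x / ρ)| := by
    simpa [flam, max_comm] using
      abs_max_sub_max_le_abs (1 - dist z x / ρ) (1 - dist z' x / ρ) 0
  have h2 : |(1 - dist z x / ρ) - (1 - dist z' x / ρ)| = |dist z' x - dist z x| / ρ := by
    rw [show (1 - dist z x / ρ) - (1 - dist z' x / ρ) = (dist z' x - dist z x) / ρ by ring,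
      abs_div, abs_of_pos hρ]
  have h3 : |dist z' x - dist z x| ≤ dist z z' := by
    rw [abs_sub_comm]
    simpa [dist_comm] using abs_dist_sub_le z z' x
  rw [h2] at h1
  exact h1.trans (by gcongr)
  

/-- the bump translation map -/
def bmp (ρ : ℝ) (x v z : ℂ) : ℂ := z + v * (flam ρ x z : ℝ)

lemma bmp_self (hρ : 0 < ρ) : bmp ρ x v x = x + v := by
  simp [bmp, flam_self hρ]

lemma bmp_far (hρ : 0 < ρ) (h : ρ ≤ dist z x) : bmp ρ x v z = z := by
  simp [bmp, flam_far hρ h]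

lemma key_est (hρ : 0 < ρ) (hv : ‖v‖ ≤ ρ / 2) :
    ‖v * (flam ρ x z : ℝ) - v * (flam ρ x z' : ℝ)‖ ≤ dist z z' / 2 := by
  rw [← mul_sub]
  rw [norm_mul]
  have h1 : ‖((flam ρ x z : ℝ) : ℂ) - ((flam ρ x z' : ℝ) : ℂ)‖ = |flam ρ x z - flam ρ x z'| := by
    rw [← Complex.ofReal_sub, Complex.norm_real, Real.norm_eq_abs]
  rw [h1]
  calc ‖v‖ * |flam ρ x z - flam ρ x z'| ≤ (ρ / 2) * (dist z z' / ρ) := by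
        apply mul_le_mul hv (flam_dist hρ) (abs_nonneg _) (by linarith)
    _ = dist z z' / 2 := by field_simp

lemma contr (hρ : 0 < ρ) (hv : ‖v‖ ≤ ρ / 2) (w : ℂ) :
    ContractingWith (1/2 : NNReal) (fun z => w - v * (flam ρ x z : ℝ)) := by
  constructor
  · rw [← NNReal.coe_lt_one]; norm_num
  · intro z z'
    simp only [edist_dist]
    rw [← ENNReal.ofReal_coe_nnreal, ← ENNReal.ofReal_mul (by positivity)]
    apply ENNReal.ofReal_le_ofReal
    rw [dist_sub_left, dist_eq_norm]
    have := key_est (x := x) (z := z) (z' := z') hρ hv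
    push_cast
    linarith

/-- inverse of the bump translation, via the contraction fixed point -/
def binv (x : ℂ) (hρ : 0 < ρ) (hv : ‖v‖ ≤ ρ / 2) (w : ℂ) : ℂ :=
  ContractingWith.fixedPoint (fun z => w - v * (flam ρ x z : ℝ)) (contr hρ hv w)

lemma binv_fixed (x : ℂ) (hρ : 0 < ρ) (hv : ‖v‖ ≤ ρ / 2) (w : ℂ) :
    binv x hρ hv w = w - v * (flam ρ x (binv x hρ hv w) : ℝ) :=
  ((contr hρ hv w).fixedPoint_isFixedPt).symm

lemma bmp_binv (x : ℂ) (hρ : 0 < ρ) (hv : ‖v‖ ≤ ρ / 2) (w : ℂ) :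
    bmp ρ x v (binv x hρ hv w) = w := by
  have e := binv_fixed x hρ hv w
  show binv x hρ hv w + v * (flam ρ x (binv x hρ hv w) : ℝ) = w
  linear_combination e

lemma bmp_inj (hρ : 0 < ρ) (hv : ‖v‖ ≤ ρ / 2) : Function.Injective (bmp ρ x v) := by
  intro z z' h
  have h2 : z - z' = -(v * (flam ρ x z : ℝ) - v * (flam ρ x z' : ℝ)) := by
    have : z + v * (flam ρ x z : ℝ) = z' + v * (flam ρ x z' : ℝ) := h
    linear_combination this
  have h3 : dist z z' ≤ dist z z' / 2 := by
    have h4 : dist z z' = ‖v * (flam ρ x z : ℝ) - v * (flam ρ x z' : ℝ)‖ := by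
      rw [dist_eq_norm, h2, norm_neg]
    calc dist z z' = ‖v * (flam ρ x z : ℝ) - v * (flam ρ x z' : ℝ)‖ := h4
      _ ≤ dist z z' / 2 := key_est hρ hv
  have : dist z z' = 0 := by have := dist_nonneg (x := z) (y := z'); linarith
  exact eq_of_dist_eq_zero this

lemma binv_bmp (x : ℂ) (hρ : 0 < ρ) (hv : ‖v‖ ≤ ρ / 2) (z : ℂ) :
    binv x hρ hv (bmp ρ x v z) = z :=
  bmp_inj hρ hv (bmp_binv x hρ hv _)

lemma binv_lip (hρ : 0 < ρ) {v' : ℂ} (hv : ‖v‖ ≤ ρ / 2) (hv' : ‖v'‖ ≤ ρ / 2)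
    (w w' : ℂ) :
    dist (binv x hρ hv w) (binv x hρ hv' w')
      ≤ 2 * (dist w w' + dist v v') := by
  set z := binv x hρ hv w with hz
  set z' := binv x hρ hv' w' with hz'
  have e1 := binv_fixed x hρ hv w
  have e2 := binv_fixed x hρ hv' w'
  rw [← hz] at e1; rw [← hz'] at e2
  have hd : z - z' = (w - w') - (v - v') * (flam ρ x z : ℝ)
      - v' * ((flam ρ x z : ℝ) - (flam ρ x z' : ℝ)) := by
    linear_combination e1 - e2
  have hb1 : ‖(v - v') * (flam ρ x z : ℝ)‖ ≤ dist v v' := by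
    rw [norm_mul, Complex.norm_real, Real.norm_eq_abs,
      abs_of_nonneg (flam_nonneg (ρ := ρ) (x := x) (z := z))]
    calc ‖v - v'‖ * flam ρ x z ≤ ‖v - v'‖ * 1 :=
          mul_le_mul_of_nonneg_left (flam_le_one hρ) (norm_nonneg _)
      _ = dist v v' := by rw [mul_one, dist_eq_norm]
  have hb2 : ‖v' * ((flam ρ x z : ℝ) - (flam ρ x z' : ℝ))‖ ≤ dist z z' / 2 := by
    have := key_est (x := x) (v := v') (z := z) (z' := z') hρ hv'
    rw [← mul_sub] at this
    exact this
  have : dist z z' ≤ dist w w' + dist v v' + dist z z' / 2 := by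
    have h0 : ‖z - z'‖ ≤ ‖(w - w') - (v - v') * (flam ρ x z : ℝ)‖
        + ‖v' * ((flam ρ x z : ℝ) - (flam ρ x z' : ℝ))‖ := by
      rw [hd]; exact norm_sub_le _ _
    have h1 : ‖(w - w') - (v - v') * (flam ρ x z : ℝ)‖
        ≤ ‖w - w'‖ + ‖(v - v') * (flam ρ x z : ℝ)‖ := norm_sub_le _ _
    have hzz : dist z z' = ‖z - z'‖ := dist_eq_norm _ _
    have hww : dist w w' = ‖w - w'‖ := dist_eq_norm _ _
    linarith
  linarith

lemma bmp_cont : Continuous fun p : ℂ × ℂ => bmp ρ x p.1 p.2 := by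
  unfold bmp flam
  fun_prop

/-- the bump homeomorphism -/
def bhomeo (x : ℂ) (hρ : 0 < ρ) (hv : ‖v‖ ≤ ρ / 2) : ℂ ≃ₜ ℂ where
  toFun := bmp ρ x v
  invFun := binv x hρ hv
  left_inv := binv_bmp x hρ hv
  right_inv := bmp_binv x hρ hv
  continuous_toFun := bmp_cont.comp (by fun_prop : Continuous fun z : ℂ => ((v, z) : ℂ × ℂ))
  continuous_invFun := by
    apply Metric.continuous_iff.2
    intro w ε hε
    refine ⟨ε / 2, by linarith, fun w' hw' => ?_⟩
    show dist (binv x hρ hv w') (binv x hρ hv w) < ε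
    have := binv_lip (x := x) hρ hv hv w' w
    simp only [dist_self, add_zero] at this
    linarith


open scoped Classical in
/-- safe distance from `b` to the finite set `S` -/
def rad (S : Set ℂ) (b : ℂ) : ℝ := if S.Nonempty then Metric.infDist b S else 1

lemma rad_pos {S : Set ℂ} (hS : S.Finite) {b : ℂ} (hb : b ∉ S) : 0 < rad S b := by
  rw [rad]
  split_ifs with h
  · exact (hS.isClosed.notMem_iff_infDist_pos h).1 hb
  · norm_num

lemma rad_le {S : Set ℂ} {b z : ℂ} (hz : z ∈ S) : rad S b ≤ dist z b := by
  rw [rad, if_pos ⟨z, hz⟩, dist_comm]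
  exact Metric.infDist_le_dist_of_mem hz

lemma not_mem_of_dist_lt_rad {S : Set ℂ} {b c : ℂ} (h : dist c b < rad S b) : c ∉ S :=
  fun hc => absurd (rad_le (b := b) hc) (by linarith)

lemma rad_rad {S : Set ℂ} {b c : ℂ} : rad S b - dist c b ≤ rad S c := by
  rw [rad, rad]
  split_ifs with h
  · have := Metric.infDist_le_infDist_add_dist (x := b) (y := c) (s := S)
    rw [dist_comm] at this
    linarith
  · have := dist_nonneg (x := c) (y := b); linarith

lemma move_step {S : Set ℂ} (hS : S.Finite) {b b' : ℂ} (hb : b ∉ S)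
    (h : dist b' b ≤ rad S b / 2) :
    ∃ ψ : ℂ ≃ₜ ℂ, (∀ z ∈ S, ψ z = z) ∧ ψ b = b' := by
  have hρ : 0 < rad S b := rad_pos hS hb
  have hv : ‖b' - b‖ ≤ rad S b / 2 := by rwa [← dist_eq_norm]
  refine ⟨bhomeo (ρ := rad S b) (v := b' - b) b hρ hv, fun z hz => ?_, ?_⟩
  · exact bmp_far hρ (rad_le hz)
  · show bmp (rad S b) b (b' - b) b = b'
    rw [bmp_self hρ]; ring

lemma reach {S : Set ℂ} (hS : S.Finite) {a b : ℂ} (ha : a ∉ S) (hb : b ∉ S) :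
    ∃ ψ : ℂ ≃ₜ ℂ, (∀ z ∈ S, ψ z = z) ∧ ψ a = b := by
  set R : Set ℂ := {c | c ∉ S ∧ ∃ ψ : ℂ ≃ₜ ℂ, (∀ z ∈ S, ψ z = z) ∧ ψ a = c} with hR
  have hRopen : IsOpen R := by
    rw [Metric.isOpen_iff]
    rintro b0 ⟨hb0, ψ0, hψ0S, hψ0a⟩
    refine ⟨rad S b0 / 4, by have := rad_pos hS hb0; linarith, fun c hc => ?_⟩
    rw [mem_ball] at hc
    have hpos := rad_pos hS hb0
    have hcS : c ∉ S := not_mem_of_dist_lt_rad (by linarith)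
    obtain ⟨φ, hφS, hφb⟩ := move_step hS hb0 (b' := c) (by linarith)
    exact ⟨hcS, ψ0.trans φ, fun z hz => by simp [hψ0S z hz, hφS z hz],
      by simp [hψ0a, hφb]⟩
  have hR2open : IsOpen (Sᶜ \ R) := by
    rw [Metric.isOpen_iff]
    rintro b0 ⟨hb0, hb0R⟩
    have hpos := rad_pos hS hb0
    refine ⟨rad S b0 / 4, by linarith, fun c hc => ?_⟩
    rw [mem_ball] at hc
    have hcS : c ∉ S := not_mem_of_dist_lt_rad (by linarith)
    refine ⟨hcS, fun hcR => hb0R ?_⟩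
    obtain ⟨-, ψ0, hψ0S, hψ0a⟩ := hcR
    have hrc : rad S b0 - dist c b0 ≤ rad S c := rad_rad
    have hd : dist b0 c ≤ rad S c / 2 := by rw [dist_comm]; linarith
    obtain ⟨φ, hφS, hφb⟩ := move_step hS hcS hd
    exact ⟨hb0, ψ0.trans φ, fun z hz => by simp [hψ0S z hz, hφS z hz],
      by simp [hψ0a, hφb]⟩
  have hconn : IsPreconnected (Sᶜ : Set ℂ) :=
    ((hS.countable.isPathConnected_compl_of_one_lt_rank
      (by rw [Complex.rank_real_complex]; norm_num)).isConnected).isPreconnected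
  by_contra hcon
  have hbR : b ∈ Sᶜ \ R := ⟨hb, fun h => hcon h.2⟩
  have := hconn R (Sᶜ \ R) hRopen hR2open
    (fun c hc => by by_cases h : c ∈ R; exacts [Or.inl h, Or.inr ⟨hc, h⟩])
    ⟨a, ha, ha, ⟨Homeomorph.refl ℂ, fun z _ => rfl, rfl⟩⟩ ⟨b, hb, hbR⟩
  obtain ⟨c, -, hc1, -, hc2⟩ := this
  exact hc2 hc1


end FNaux


namespace FNaux

/-- the section function -/
def sfun (m n : ℕ) (x : PuncturedPlane m) (i : Fin n) : PuncturedPlane m :=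
  if i.1 = 0 then x else
    ⟨((‖x.1‖ + m + i.1 : ℝ) : ℂ), by
      intro k hEq
      have hk : (k : ℕ) < m := k.2
      rw [show (((k:ℕ):ℕ):ℂ) = ((((k:ℕ):ℕ):ℝ):ℂ) by push_cast; ring] at hEq
      have h0 := Complex.ofReal_inj.1 hEq
      have h1 : (0:ℝ) ≤ ‖x.1‖ := norm_nonneg _
      have h2 : (((k:ℕ):ℕ):ℝ) < m := by exact_mod_cast hk
      have h3 : (0:ℝ) ≤ (i.1 : ℝ) := by positivity
      linarith⟩

lemma sfun_inj (m n : ℕ) (x : PuncturedPlane m) : Function.Injective (sfun m n x) := by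
  have key : ∀ i j : Fin n, i.1 = 0 → ¬ j.1 = 0 → sfun m n x i ≠ sfun m n x j := by
    intro i j hi hj h
    have hval := congrArg Subtype.val h
    simp only [sfun, if_pos hi, if_neg hj] at hval
    have hnorm := congrArg norm hval
    rw [Complex.norm_real, Real.norm_eq_abs,
      abs_of_nonneg (by positivity : (0:ℝ) ≤ ‖x.1‖ + m + j.1)] at hnorm
    have hj1 : (1:ℝ) ≤ (j.1 : ℝ) := by exact_mod_cast Nat.one_le_iff_ne_zero.2 hj
    have hm : (0:ℝ) ≤ (m:ℝ) := by positivity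
    linarith
  intro i j h
  by_cases hi : i.1 = 0 <;> by_cases hj : j.1 = 0
  · exact Fin.ext (hi.trans hj.symm)
  · exact absurd h (key i j hi hj)
  · exact absurd h.symm (key j i hj hi)
  · have hval := congrArg Subtype.val h
    simp only [sfun, if_neg hi, if_neg hj] at hval
    have := Complex.ofReal_inj.1 hval
    have : (i.1 : ℝ) = (j.1 : ℝ) := by linarith
    exact Fin.ext (by exact_mod_cast this)

/-- the global section -/
def secmap (m n : ℕ) : C(PuncturedPlane m, Config m n) :=
  ⟨fun x => ⟨sfun m n x, sfun_inj m n x⟩, by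
    apply Continuous.subtype_mk
    apply continuous_pi
    intro i
    by_cases hi : i.1 = 0
    · simpa only [sfun, if_pos hi] using continuous_id'
    · simp only [sfun, if_neg hi]
      apply Continuous.subtype_mk
      fun_prop⟩

/-- extension of a configuration in the `(m+1)`-punctured plane by the point `m` -/
def extC {m n : ℕ} (c : Config (m+1) (n-1)) (i : Fin n) : ℂ :=
  if h : i.1 = 0 then (m : ℂ) else (c.1 ⟨i.1 - 1, by have := i.2; omega⟩).1

lemma extC_ne_lt {m n : ℕ} (c : Config (m+1) (n-1)) (i : Fin n) (k : ℕ) (hk : k < m) :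
    extC c i ≠ (k : ℂ) := by
  rw [extC]
  split_ifs with h
  · intro hEq
    exact absurd (Nat.cast_inj.1 hEq) (by omega)
  · intro hEq
    exact (c.1 _).2 ⟨k, by omega⟩ hEq

lemma extC_ne_m {m n : ℕ} (c : Config (m+1) (n-1)) (i : Fin n) (hi : ¬ i.1 = 0) :
    extC c i ≠ (m : ℂ) := by
  rw [extC, dif_neg hi]
  exact (c.1 _).2 ⟨m, by omega⟩

lemma extC_inj {m n : ℕ} (c : Config (m+1) (n-1)) : Function.Injective (extC c) := by
  intro i j h
  rw [extC, extC] at h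
  split_ifs at h with hi hj hj
  · exact Fin.ext (hi.trans hj.symm)
  · exact absurd h.symm ((c.1 _).2 ⟨m, by omega⟩)
  · exact absurd h ((c.1 _).2 ⟨m, by omega⟩)
  · have := c.2 (Subtype.ext h)
    have := congrArg Fin.val this
    simp only at this
    exact Fin.ext (by omega)

lemma binv_congr {r : ℝ} {x : ℂ} (hr : 0 < r) {v v' : ℂ} (h : v = v')
    (hv : ‖v‖ ≤ r/2) (hv' : ‖v'‖ ≤ r/2) (w : ℂ) :
    binv x hr hv w = binv x hr hv' w := by subst h; rfl

lemma binv_cont_family {r : ℝ} {x : ℂ} (hr : 0 < r) :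
    Continuous (fun q : {v : ℂ // ‖v‖ ≤ r/2} × ℂ => binv x hr q.1.2 q.2) := by
  apply Metric.continuous_iff.2
  intro q ε hε
  refine ⟨ε / 5, by linarith, fun q' hq' => ?_⟩
  have h1 : dist q'.1.1 q.1.1 ≤ dist q' q := by
    rw [Prod.dist_eq, Subtype.dist_eq]
    exact le_max_left _ _
  have h2 : dist q'.2 q.2 ≤ dist q' q := by
    rw [Prod.dist_eq]
    exact le_max_right _ _
  have := binv_lip (x := x) hr q'.1.2 q.1.2 q'.2 q.2
  linarith

end FNaux


open FNaux

set_option maxHeartbeats 2000000 in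
theorem statement9 (n m : ℕ) (hn : 2 ≤ n) :
    (∀ x : PuncturedPlane m, ∃ U : Set (PuncturedPlane m), IsOpen U ∧ x ∈ U ∧
      ∃ e : (U × Config (m + 1) (n - 1)) ≃ₜ
          {y : Config m n // y.1 ⟨0, by omega⟩ ∈ U},
        ∀ z : U × Config (m + 1) (n - 1),
          (e z).1.1 ⟨0, by omega⟩ = (z.1 : PuncturedPlane m)) ∧
    ∃ s : C(PuncturedPlane m, Config m n), ∀ x, (s x).1 ⟨0, by omega⟩ = x := by
  constructor
  · intro x
    classical
    set S : Set ℂ := Set.range (fun i : Fin m => ((i:ℕ):ℂ)) with hSdef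
    have hSfin : S.Finite := Set.finite_range _
    have hxS : x.1 ∉ S := by rintro ⟨i, hi⟩; exact x.2 i hi.symm
    have hmS : (m:ℂ) ∉ S := by
      rintro ⟨i, hi⟩
      have h1 : ((i:ℕ):ℕ) = m := Nat.cast_inj.1 hi
      have := i.2; omega
    obtain ⟨ψ, hψS, hψm⟩ := reach hSfin hmS hxS
    set r : ℝ := rad S x.1 with hrdef
    have hr : 0 < r := rad_pos hSfin hxS
    have hrS : ∀ k : ℕ, k < m → r ≤ dist ((k:ℕ):ℂ) x.1 := fun k hk => rad_le ⟨⟨k, hk⟩, rfl⟩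
    have hψk : ∀ k : ℕ, k < m → ψ ((k:ℕ):ℂ) = ((k:ℕ):ℂ) := fun k hk => hψS _ ⟨⟨k, hk⟩, rfl⟩
    set U : Set (PuncturedPlane m) := {u : PuncturedPlane m | dist u.1 x.1 < r/2} with hUdef
    have hv : ∀ u : U, ‖u.1.1 - x.1‖ ≤ r/2 := fun u => by
      rw [← dist_eq_norm]; exact le_of_lt u.2
    have fwd_mem : ∀ (u : U) (c : Config (m+1) (n-1)) (i : Fin n) (k : Fin m),
        bmp r x.1 (u.1.1 - x.1) (ψ (extC c i)) ≠ ((k:ℕ):ℂ) := by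
      intro u c i k hEq
      have hfix : bmp r x.1 (u.1.1 - x.1) (ψ ((k:ℕ):ℂ)) = ((k:ℕ):ℂ) := by
        rw [hψk k k.2, bmp_far hr (hrS k k.2)]
      have h2 : extC c i = ((k:ℕ):ℂ) :=
        ((bmp_inj hr (hv u)).comp ψ.injective) (hEq.trans hfix.symm)
      exact extC_ne_lt c i k k.2 h2
    have fwd_zero : ∀ (u : U) (c : Config (m+1) (n-1)) (h0 : 0 < n),
        bmp r x.1 (u.1.1 - x.1) (ψ (extC c ⟨0, h0⟩)) = u.1.1 := by
      intro u c h0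
      rw [extC, dif_pos rfl, hψm, bmp_self hr]
      ring
    have binv_inj : ∀ (u : U) (w w' : ℂ),
        binv x.1 hr (hv u) w = binv x.1 hr (hv u) w' → w = w' := by
      intro u w w' h
      have := congrArg (bmp r x.1 (u.1.1 - x.1)) h
      rwa [bmp_binv, bmp_binv] at this
    have bwd_mem : ∀ (y : {y : Config m n // y.1 ⟨0, by omega⟩ ∈ U}) (j : Fin (n-1))
        (k : Fin (m+1)),
        ψ.symm (binv x.1 hr (hv ⟨y.1.1 ⟨0, by omega⟩, y.2⟩)
          ((y.1.1 ⟨j.1+1, by have := j.2; omega⟩).1)) ≠ ((k:ℕ):ℂ) := by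
      intro y j k hEq
      set u : U := ⟨y.1.1 ⟨0, by omega⟩, y.2⟩ with hu
      set Y : ℂ := (y.1.1 ⟨j.1+1, by have := j.2; omega⟩).1 with hY
      have h1 : binv x.1 hr (hv u) Y = ψ ((k:ℕ):ℂ) := by
        have := congrArg ψ hEq
        rwa [Homeomorph.apply_symm_apply] at this
      have h2 : Y = bmp r x.1 (u.1.1 - x.1) (ψ ((k:ℕ):ℂ)) := by
        rw [← h1, bmp_binv]
      rcases Nat.lt_or_ge (k:ℕ) m with hk | hk
      · rw [hψk k hk, bmp_far hr (hrS k hk)] at h2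
        exact (y.1.1 ⟨j.1+1, by have := j.2; omega⟩).2 ⟨k.1, hk⟩ h2
      · have hkm : (k:ℕ) = m := by have := k.2; omega
        rw [hkm] at h2
        rw [hψm, bmp_self hr] at h2
        have h3 : Y = u.1.1 := by rw [h2]; ring
        have h4 : y.1.1 ⟨j.1+1, by have := j.2; omega⟩ = y.1.1 ⟨0, by omega⟩ :=
          Subtype.ext h3
        have h5 := y.1.2 h4
        have h6 := congrArg Fin.val h5
        simp only at h6
        omega
    have bwd_inj : ∀ (y : {y : Config m n // y.1 ⟨0, by omega⟩ ∈ U}),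
        Function.Injective (fun j : Fin (n-1) =>
          (⟨ψ.symm (binv x.1 hr (hv ⟨y.1.1 ⟨0, by omega⟩, y.2⟩)
            ((y.1.1 ⟨j.1+1, by have := j.2; omega⟩).1)), bwd_mem y j⟩ : PuncturedPlane (m+1))) := by
      intro y j j' h
      have h1 := congrArg Subtype.val h
      simp only at h1
      have h2 := ψ.symm.injective h1
      have h3 := binv_inj ⟨y.1.1 ⟨0, by omega⟩, y.2⟩ _ _ h2
      have h4 := y.1.2 (Subtype.ext h3)
      have h5 := congrArg Fin.val h4
      simp only at h5
      exact Fin.ext (by omega)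
    refine ⟨U, ?_, ?_, ?_⟩
    · exact Metric.isOpen_ball.preimage continuous_subtype_val
    · show dist x.1 x.1 < r/2
      rw [dist_self]; linarith
    refine ⟨⟨⟨fun p => ⟨⟨fun i => ⟨bmp r x.1 (p.1.1.1 - x.1) (ψ (extC p.2 i)), fwd_mem p.1 p.2 i⟩,
        fun i j h => extC_inj p.2
          (((bmp_inj hr (hv p.1)).comp ψ.injective) (congrArg Subtype.val h))⟩,
        by show dist (bmp r x.1 (p.1.1.1 - x.1) (ψ (extC p.2 ⟨0, by omega⟩))) x.1 < r/2
           rw [fwd_zero p.1 p.2 (by omega)]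
           exact p.1.2⟩,
      fun y => (⟨y.1.1 ⟨0, by omega⟩, y.2⟩,
        ⟨fun j => ⟨ψ.symm (binv x.1 hr (hv ⟨y.1.1 ⟨0, by omega⟩, y.2⟩)
            ((y.1.1 ⟨j.1+1, by have := j.2; omega⟩).1)), bwd_mem y j⟩, bwd_inj y⟩),
      ?_, ?_⟩, ?_, ?_⟩, ?_⟩
    · -- left inverse
      intro p
      have h0 : bmp r x.1 (p.1.1.1 - x.1) (ψ (extC p.2 ⟨0, by omega⟩)) = p.1.1.1 :=
        fwd_zero p.1 p.2 (by omega)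
      have hvv : bmp r x.1 (p.1.1.1 - x.1) (ψ (extC p.2 ⟨0, by omega⟩)) - x.1
          = p.1.1.1 - x.1 := by rw [h0]
      refine Prod.ext (Subtype.ext (Subtype.ext h0)) ?_
      refine Subtype.ext (funext fun j => Subtype.ext ?_)
      show ψ.symm (binv x.1 hr _ (bmp r x.1 (p.1.1.1 - x.1)
        (ψ (extC p.2 ⟨j.1+1, by have := j.2; omega⟩)))) = (p.2.1 j).1
      rw [binv_congr hr hvv _ (hv p.1)]
      rw [binv_bmp, Homeomorph.symm_apply_apply]
      rw [extC, dif_neg (by omega : ¬ (j.1+1 = 0))]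
      rfl
    · -- right inverse
      intro y
      refine Subtype.ext (Subtype.ext (funext fun i => Subtype.ext ?_))
      by_cases hi : i.1 = 0
      · have hieq : i = ⟨0, by omega⟩ := Fin.ext hi
        rw [hieq]
        exact fwd_zero ⟨y.1.1 ⟨0, by omega⟩, y.2⟩ _ (by omega)
      · show bmp r x.1 _ (ψ (extC _ i)) = (y.1.1 i).1
        rw [extC, dif_neg hi]
        show bmp r x.1 _ (ψ (ψ.symm (binv x.1 hr _ _))) = (y.1.1 i).1
        rw [Homeomorph.apply_symm_apply, bmp_binv]
        have h1 : i.1 - 1 + 1 = i.1 := by omega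
        simp only [h1]
    · -- continuity of toFun
      apply Continuous.subtype_mk
      apply Continuous.subtype_mk
      apply continuous_pi
      intro i
      apply Continuous.subtype_mk
      have hA : Continuous fun p : ↑U × Config (m+1) (n-1) => p.1.1.1 - x.1 := by fun_prop
      have hB : Continuous fun p : ↑U × Config (m+1) (n-1) => ψ (extC p.2 i) := by
        apply ψ.continuous.comp
        by_cases hi : i.1 = 0
        · simp only [extC, dif_pos hi]
          exact continuous_const
        · simp only [extC, dif_neg hi]
          exact continuous_subtype_val.comp
            ((continuous_apply _).comp (continuous_subtype_val.comp continuous_snd))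
      exact bmp_cont.comp (hA.prodMk hB)
    · -- continuity of invFun
      have hy0 : Continuous fun y : {y : Config m n // y.1 ⟨0, by omega⟩ ∈ U} =>
          y.1.1 ⟨0, by omega⟩ :=
        (continuous_apply _).comp (continuous_subtype_val.comp continuous_subtype_val)
      apply Continuous.prodMk
      · exact Continuous.subtype_mk hy0 _
      · apply Continuous.subtype_mk
        apply continuous_pi
        intro j
        apply Continuous.subtype_mk
        apply ψ.symm.continuous.comp
        have hA : Continuous fun y : {y : Config m n // y.1 ⟨0, by omega⟩ ∈ U} =>
            (y.1.1 ⟨0, by omega⟩).1 - x.1 :=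
          (continuous_subtype_val.comp hy0).sub continuous_const
        have hB : Continuous fun y : {y : Config m n // y.1 ⟨0, by omega⟩ ∈ U} =>
            (y.1.1 ⟨j.1+1, by have := j.2; omega⟩).1 :=
          continuous_subtype_val.comp
            ((continuous_apply _).comp (continuous_subtype_val.comp continuous_subtype_val))
        exact (binv_cont_family hr).comp
          ((Continuous.subtype_mk hA (fun y => hv ⟨y.1.1 ⟨0, by omega⟩, y.2⟩)).prodMk hB)
    · -- first coordinate
      intro z
      exact Subtype.ext (fwd_zero z.1 z.2 (by omega))
  · refine ⟨secmap m n, fun x => ?_⟩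
    show sfun m n x ⟨0, by omega⟩ = x
    rw [sfun, if_pos rfl]
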